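/- Let P_A and P_B be convex polygons (convex hulls of vertex lists in cyclic order) in ℝ². If no vertex of either polygon lies in the other polygon and no edge of P_A intersects any edge of P_B, then P_A and P_B are disjoint. -/

import Mathlib

open Set
set_option maxHeartbeats 1000000

noncomputable section
namespace PolyAux

abbrev E2 := EuclideanSpace ℝ (Fin 2)

def det2 (u v : E2) : ℝ := u 0 * v 1 - u 1 * v 0

lemma ext2 {u v : E2} (h0 : u 0 = v 0) (h1 : u 1 = v 1) : u = v := by
  rw [WithLp.ext_iff]
  funext i
  fin_cases i <;> assumption

lemma det2_parallel {u v : E2} (h : det2 u v = 0) (hu : u ≠ 0) : ∃ t : ℝ, v = t • u := by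
  have h' : u 0 * v 1 = u 1 * v 0 := by simp [det2] at h; linarith
  rcases eq_or_ne (u 0) 0 with h0 | h0
  · rcases eq_or_ne (u 1) 0 with h1 | h1
    · exact absurd (ext2 (by simpa using h0) (by simpa using h1)) hu
    · have hv0 : v 0 = 0 := by
        rw [h0] at h'
        field_simp at h'
        simp only [zero_mul] at h'
        exact (mul_eq_zero.mp h'.symm).resolve_left h1
      refine ⟨v 1 / u 1, ext2 ?_ ?_⟩ <;>
        simp only [PiLp.smul_apply, smul_eq_mul]
      · rw [h0, hv0]; ring
      · field_simp
  · refine ⟨v 0 / u 0, ext2 ?_ ?_⟩ <;>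
      simp only [PiLp.smul_apply, smul_eq_mul]
    · field_simp
    · field_simp; linarith [h']

lemma det2_self (u : E2) : det2 u u = 0 := by simp [det2]; ring

lemma det2_zero_left (v : E2) : det2 0 v = 0 := by simp [det2]

lemma det2_zero_right (u : E2) : det2 u 0 = 0 := by simp [det2]

lemma det2_combo_left (a b : ℝ) (p q v : E2) :
    det2 (a • p + b • q) v = a * det2 p v + b * det2 q v := by
  simp [det2, PiLp.add_apply, PiLp.smul_apply, smul_eq_mul]; ring

lemma det2_combo_right (a b : ℝ) (u p q : E2) :
    det2 u (a • p + b • q) = a * det2 u p + b * det2 u q := by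
  simp [det2, PiLp.add_apply, PiLp.smul_apply, smul_eq_mul]; ring

lemma vid (u v : E2) (y : E2) : det2 y v • u + det2 u y • v = det2 u v • y := by
  apply ext2 <;>
    simp only [det2, PiLp.smul_apply, PiLp.add_apply, smul_eq_mul] <;> ring

lemma combo_sub (a b : ℝ) (p q t : E2) (hab : a + b = 1) :
    a • p + b • q - t = a • (p - t) + b • (q - t) := by
  have hb : b = 1 - a := by linarith
  subst hb
  apply ext2 <;>
    simp only [PiLp.smul_apply, PiLp.add_apply, PiLp.sub_apply, smul_eq_mul] <;> ring

/-- Collinear case: hull of the three points is contained in one of the three segments. -/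
lemma tri_cover {t1 t2 t3 : E2} (hcol : det2 (t2 - t1) (t3 - t1) = 0) :
    (convexHull ℝ {t1, t2, t3} ⊆ segment ℝ t1 t2) ∨
    (convexHull ℝ {t1, t2, t3} ⊆ segment ℝ t2 t3) ∨
    (convexHull ℝ {t1, t2, t3} ⊆ segment ℝ t1 t3) := by
  rcases eq_or_ne (t2 - t1) 0 with h0 | h0
  · right; right
    have ht : t2 = t1 := by
      have := sub_eq_zero.mp h0; exact this
    refine convexHull_min ?_ (convex_segment _ _)
    rintro v (rfl | rfl | rfl)
    · exact left_mem_segment ℝ _ _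
    · rw [ht]; exact left_mem_segment ℝ _ _
    · exact right_mem_segment ℝ _ _
  obtain ⟨r, hr⟩ := det2_parallel hcol h0
  rcases le_or_gt 0 r with hr0 | hr0
  · rcases le_or_gt r 1 with hr1 | hr1
    · -- t3 ∈ segment t1 t2
      left
      have ht3 : t3 ∈ segment ℝ t1 t2 := by
        refine ⟨1 - r, r, by linarith, hr0, by ring, ?_⟩
        have : t3 - t1 = r • (t2 - t1) := hr
        rw [smul_sub] at this
        rw [sub_smul, one_smul]
        have h2 : t3 = t1 + (r • t2 - r • t1) := by
          rw [← this]; abel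
        rw [h2]; abel
      refine convexHull_min ?_ (convex_segment _ _)
      rintro v (rfl | rfl | rfl)
      · exact left_mem_segment ℝ _ _
      · exact right_mem_segment ℝ _ _
      · exact ht3
    · -- r > 1 : t2 ∈ segment t1 t3
      right; right
      have ht2 : t2 ∈ segment ℝ t1 t3 := by
        refine ⟨1 - 1/r, 1/r, by
          have : 1/r ≤ 1 := by
            rw [div_le_one (by linarith)]; linarith
          linarith, by positivity, by ring, ?_⟩
        have hr' : t3 = t1 + r • (t2 - t1) := by rw [← hr]; abel
        rw [hr', smul_add, smul_smul]
        rw [sub_smul, one_smul, smul_sub]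
        field_simp
        module
      refine convexHull_min ?_ (convex_segment _ _)
      rintro v (rfl | rfl | rfl)
      · exact left_mem_segment ℝ _ _
      · exact ht2
      · exact right_mem_segment ℝ _ _
  · -- r < 0 : t1 ∈ segment t2 t3
    right; left
    have ht1 : t1 ∈ segment ℝ t2 t3 := by
      have hden : (0:ℝ) < 1 - r := by linarith
      refine ⟨-r / (1 - r), 1 / (1 - r), div_nonneg (by linarith) hden.le, div_nonneg (by linarith) hden.le, by field_simp; ring, ?_⟩
      have hr' : t3 = t1 + r • (t2 - t1) := by rw [← hr]; abel
      rw [hr']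
      rw [smul_add, smul_smul, smul_sub]
      apply ext2 <;>
        simp only [PiLp.smul_apply, PiLp.add_apply, PiLp.sub_apply, smul_eq_mul] <;>
        field_simp <;> ring
    refine convexHull_min ?_ (convex_segment _ _)
    rintro v (rfl | rfl | rfl)
    · exact ht1
    · exact left_mem_segment ℝ _ _
    · exact right_mem_segment ℝ _ _



lemma coord_step {cx cz tt t' : ℝ} (hx : 0 ≤ cx) (hz : cz < 0) (ht' : t' = cx / (cx - cz))
    (htt : tt ≤ t') (htt0 : 0 ≤ tt) : 0 ≤ (1 - tt) * cx + tt * cz := by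
  have hden : 0 < cx - cz := by linarith
  have e1 : (1 - tt) * cx + tt * cz = cx - tt * (cx - cz) := by ring
  rw [e1]
  have e2 : tt * (cx - cz) ≤ t' * (cx - cz) := by nlinarith
  rw [ht', div_mul_cancel₀ _ hden.ne'] at e2
  linarith

lemma coord_zero {cx cz t' : ℝ} (hz : cz < 0) (hx : 0 ≤ cx) (ht' : t' = cx / (cx - cz)) :
    (1 - t') * cx + t' * cz = 0 := by
  have hden : 0 < cx - cz := by linarith
  have h1 : t' * (cx - cz) = cx := by rw [ht', div_mul_cancel₀ _ hden.ne']
  nlinarith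

lemma coord_lt_one {cx cz t' : ℝ} (hz : cz < 0) (hx : 0 ≤ cx) (ht' : t' = cx / (cx - cz)) :
    t' < 1 := by
  have hden : 0 < cx - cz := by linarith
  rw [ht', div_lt_one hden]
  linarith

lemma coord_mem01 {cx cz t' : ℝ} (hz : cz < 0) (hx : 0 ≤ cx) (ht' : t' = cx / (cx - cz)) :
    0 ≤ t' := by
  have hden : 0 < cx - cz := by linarith
  rw [ht']
  positivity

/-- Exit point of the segment from `x` (inside the triangle) to `z` (outside):
some point of the segment lies on one of the triangle's sides. -/
lemma tri_exit {t1 t2 t3 x z : E2} (hd : det2 (t2 - t1) (t3 - t1) ≠ 0)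
    (hx : x ∈ convexHull ℝ {t1, t2, t3}) (hz : z ∉ convexHull ℝ {t1, t2, t3}) :
    ∃ y ∈ segment ℝ x z,
      y ∈ segment ℝ t2 t3 ∨ y ∈ segment ℝ t1 t3 ∨ y ∈ segment ℝ t1 t2 := by
  set u := t2 - t1 with hu
  set v := t3 - t1 with hv
  set dd := det2 u v with hdd
  -- barycentric coordinates
  set c2 : E2 → ℝ := fun p => det2 (p - t1) v / dd with hc2
  set c3 : E2 → ℝ := fun p => det2 u (p - t1) / dd with hc3
  set c1 : E2 → ℝ := fun p => 1 - c2 p - c3 p with hc1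
  have hsum : ∀ p, c1 p + c2 p + c3 p = 1 := fun p => by rw [hc1]; ring
  have hIDaux : ∀ p : E2, c2 p • u + c3 p • v = p - t1 := by
    intro p
    have h1 : c2 p • u = dd⁻¹ • (det2 (p - t1) v • u) := by
      rw [smul_smul, hc2]; congr 1; field_simp
    have h2 : c3 p • v = dd⁻¹ • (det2 u (p - t1) • v) := by
      rw [smul_smul, hc3]; congr 1; field_simp
    rw [h1, h2, ← smul_add, vid u v (p - t1), ← hdd, smul_smul, inv_mul_cancel₀ hd, one_smul]
  have hID : ∀ p : E2, c1 p • t1 + c2 p • t2 + c3 p • t3 = p := by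
    intro p
    have expand : c1 p • t1 + c2 p • t2 + c3 p • t3 = t1 + (c2 p • u + c3 p • v) := by
      rw [hc1, hu, hv]
      apply ext2 <;>
        simp only [PiLp.smul_apply, PiLp.add_apply, PiLp.sub_apply, smul_eq_mul] <;> ring
    rw [expand, hIDaux]
    abel
  have haff2 : ∀ (a b : ℝ) (p q : E2), a + b = 1 → c2 (a • p + b • q) = a * c2 p + b * c2 q := by
    intro a b p q hab
    simp only [hc2]
    rw [combo_sub a b p q t1 hab, det2_combo_left]
    ring
  have haff3 : ∀ (a b : ℝ) (p q : E2), a + b = 1 → c3 (a • p + b • q) = a * c3 p + b * c3 q := by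
    intro a b p q hab
    simp only [hc3]
    rw [combo_sub a b p q t1 hab, det2_combo_right]
    ring
  have haff1 : ∀ (a b : ℝ) (p q : E2), a + b = 1 → c1 (a • p + b • q) = a * c1 p + b * c1 q := by
    intro a b p q hab
    simp only [hc1]
    rw [haff2 a b p q hab, haff3 a b p q hab]
    nlinarith [hab]
  -- values at vertices
  have hvals2 : c2 t1 = 0 ∧ c2 t2 = 1 ∧ c2 t3 = 0 := by
    refine ⟨?_, ?_, ?_⟩ <;> simp only [hc2]
    · rw [sub_self, det2_zero_left, zero_div]
    · rw [← hu, ← hdd, div_self hd]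
    · rw [← hv, det2_self, zero_div]
  have hvals3 : c3 t1 = 0 ∧ c3 t2 = 0 ∧ c3 t3 = 1 := by
    refine ⟨?_, ?_, ?_⟩ <;> simp only [hc3]
    · rw [sub_self, det2_zero_right, zero_div]
    · rw [← hu, det2_self, zero_div]
    · rw [← hv, ← hdd, div_self hd]
  have hvals1 : c1 t1 = 1 ∧ c1 t2 = 0 ∧ c1 t3 = 0 := by
    simp only [hc1]
    rw [hvals2.1, hvals2.2.1, hvals2.2.2, hvals3.1, hvals3.2.1, hvals3.2.2]
    norm_num
  -- membership gives nonnegative coordinates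
  have hmem_nonneg : ∀ p, p ∈ convexHull ℝ ({t1, t2, t3} : Set E2) →
      0 ≤ c1 p ∧ 0 ≤ c2 p ∧ 0 ≤ c3 p := by
    intro p hp
    rw [show ({t1, t2, t3} : Set E2) = insert t1 {t2, t3} from rfl,
      convexHull_insert ⟨t2, by simp⟩, convexHull_pair, mem_convexJoin] at hp
    obtain ⟨w1, hw1, m, hm, hpm⟩ := hp
    rw [Set.mem_singleton_iff] at hw1
    rw [hw1] at hpm
    obtain ⟨pp, qq, hpp, hqq, hpq, rfl⟩ := hm
    obtain ⟨a, b, ha, hb, hab, rfl⟩ := hpm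
    have e2 : c2 (a • t1 + b • (pp • t2 + qq • t3)) = b * pp := by
      rw [haff2 a b _ _ hab, haff2 pp qq _ _ hpq, hvals2.1, hvals2.2.1, hvals2.2.2]; ring
    have e3 : c3 (a • t1 + b • (pp • t2 + qq • t3)) = b * qq := by
      rw [haff3 a b _ _ hab, haff3 pp qq _ _ hpq, hvals3.1, hvals3.2.1, hvals3.2.2]; ring
    have e1 : c1 (a • t1 + b • (pp • t2 + qq • t3)) = a := by
      simp only [hc1]; rw [e2, e3]; nlinarith
    rw [e1, e2, e3]
    exact ⟨ha, mul_nonneg hb hpp, mul_nonneg hb hqq⟩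
  -- nonnegative coordinates give membership
  have hnonneg_mem : ∀ p : E2, 0 ≤ c1 p → 0 ≤ c2 p → 0 ≤ c3 p →
      p ∈ convexHull ℝ ({t1, t2, t3} : Set E2) := by
    intro p h1 h2 h3
    have ht1M : t1 ∈ convexHull ℝ ({t1, t2, t3} : Set E2) := subset_convexHull ℝ _ (by simp)
    have ht2M : t2 ∈ convexHull ℝ ({t1, t2, t3} : Set E2) := subset_convexHull ℝ _ (by simp)
    have ht3M : t3 ∈ convexHull ℝ ({t1, t2, t3} : Set E2) := subset_convexHull ℝ _ (by simp)
    have hsump := hsum p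
    rcases eq_or_ne (c1 p) 1 with h1e | h1n
    · have hc2p : c2 p = 0 := by linarith
      have hc3p : c3 p = 0 := by linarith
      have hid := hID p
      rw [h1e, hc2p, hc3p] at hid
      simp only [one_smul, zero_smul, add_zero] at hid
      rw [← hid]; exact ht1M
    · have h1lt : c1 p < 1 := lt_of_le_of_ne (by linarith) h1n
      have hden : (0:ℝ) < 1 - c1 p := by linarith
      have hmM : (c2 p / (1 - c1 p)) • t2 + (c3 p / (1 - c1 p)) • t3 ∈
          convexHull ℝ ({t1, t2, t3} : Set E2) := by
        apply convex_convexHull ℝ _ ht2M ht3M (div_nonneg h2 hden.le) (div_nonneg h3 hden.le)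
        rw [← add_div, div_eq_one_iff_eq hden.ne']
        linarith
      have hpe : p = c1 p • t1 +
          (1 - c1 p) • ((c2 p / (1 - c1 p)) • t2 + (c3 p / (1 - c1 p)) • t3) := by
        have e2 : (1 - c1 p) * (c2 p / (1 - c1 p)) = c2 p := by field_simp
        have e3 : (1 - c1 p) * (c3 p / (1 - c1 p)) = c3 p := by field_simp
        rw [smul_add, smul_smul, smul_smul, e2, e3, ← add_assoc]
        exact (hID p).symm
      rw [hpe]
      exact convex_convexHull ℝ _ ht1M hmM h1 (by linarith) (by ring)
  -- the outside point has a negative coordinate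
  have hzneg : c1 z < 0 ∨ c2 z < 0 ∨ c3 z < 0 := by
    by_contra hcon
    push_neg at hcon
    exact hz (hnonneg_mem z hcon.1 hcon.2.1 hcon.2.2)
  obtain ⟨hx1, hx2, hx3⟩ := hmem_nonneg x hx
  -- the three candidate exit times
  set s1 : ℝ := if c1 z < 0 then c1 x / (c1 x - c1 z) else 1 with hs1
  set s2 : ℝ := if c2 z < 0 then c2 x / (c2 x - c2 z) else 1 with hs2
  set s3 : ℝ := if c3 z < 0 then c3 x / (c3 x - c3 z) else 1 with hs3
  have hs1el : 0 ≤ s1 ∧ s1 ≤ 1 := by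
    rw [hs1]; split_ifs with h
    · exact ⟨coord_mem01 h hx1 rfl, (coord_lt_one h hx1 rfl).le⟩
    · norm_num
  have hs2el : 0 ≤ s2 ∧ s2 ≤ 1 := by
    rw [hs2]; split_ifs with h
    · exact ⟨coord_mem01 h hx2 rfl, (coord_lt_one h hx2 rfl).le⟩
    · norm_num
  have hs3el : 0 ≤ s3 ∧ s3 ≤ 1 := by
    rw [hs3]; split_ifs with h
    · exact ⟨coord_mem01 h hx3 rfl, (coord_lt_one h hx3 rfl).le⟩
    · norm_num
  set tt := min s1 (min s2 s3) with htt
  have htt0 : 0 ≤ tt := le_min hs1el.1 (le_min hs2el.1 hs3el.1)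
  have htt1 : tt ≤ 1 := le_trans (min_le_left _ _) hs1el.2
  have htle1 : tt ≤ s1 := min_le_left _ _
  have htle2 : tt ≤ s2 := le_trans (min_le_right _ _) (min_le_left _ _)
  have htle3 : tt ≤ s3 := le_trans (min_le_right _ _) (min_le_right _ _)
  set y := (1 - tt) • x + tt • z with hy
  have hyseg : y ∈ segment ℝ x z := ⟨1 - tt, tt, by linarith, htt0, by ring, rfl⟩
  have hysum : tt + (1 - tt) = 1 := by ring
  have hval1 : c1 y = (1 - tt) * c1 x + tt * c1 z := haff1 (1 - tt) tt x z (by ring)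
  have hval2 : c2 y = (1 - tt) * c2 x + tt * c2 z := haff2 (1 - tt) tt x z (by ring)
  have hval3 : c3 y = (1 - tt) * c3 x + tt * c3 z := haff3 (1 - tt) tt x z (by ring)
  -- all coordinates of y are nonnegative
  have hy1 : 0 ≤ c1 y := by
    rw [hval1]
    rcases lt_or_ge (c1 z) 0 with h | h
    · have hs' : s1 = c1 x / (c1 x - c1 z) := by rw [hs1, if_pos h]
      exact coord_step hx1 h rfl (hs' ▸ htle1) htt0
    · have := mul_nonneg (by linarith : (0:ℝ) ≤ 1 - tt) hx1
      have := mul_nonneg htt0 h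
      linarith
  have hy2 : 0 ≤ c2 y := by
    rw [hval2]
    rcases lt_or_ge (c2 z) 0 with h | h
    · have hs' : s2 = c2 x / (c2 x - c2 z) := by rw [hs2, if_pos h]
      exact coord_step hx2 h rfl (hs' ▸ htle2) htt0
    · have := mul_nonneg (by linarith : (0:ℝ) ≤ 1 - tt) hx2
      have := mul_nonneg htt0 h
      linarith
  have hy3 : 0 ≤ c3 y := by
    rw [hval3]
    rcases lt_or_ge (c3 z) 0 with h | h
    · have hs' : s3 = c3 x / (c3 x - c3 z) := by rw [hs3, if_pos h]
      exact coord_step hx3 h rfl (hs' ▸ htle3) htt0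
    · have := mul_nonneg (by linarith : (0:ℝ) ≤ 1 - tt) hx3
      have := mul_nonneg htt0 h
      linarith
  -- some coordinate of y vanishes
  have httlt : tt < 1 := by
    rcases hzneg with h | h | h
    · exact lt_of_le_of_lt htle1 (by
        have hs' : s1 = c1 x / (c1 x - c1 z) := by rw [hs1, if_pos h]
        rw [hs']
        exact coord_lt_one h hx1 rfl)
    · exact lt_of_le_of_lt htle2 (by
        have hs' : s2 = c2 x / (c2 x - c2 z) := by rw [hs2, if_pos h]
        rw [hs']
        exact coord_lt_one h hx2 rfl)
    · exact lt_of_le_of_lt htle3 (by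
        have hs' : s3 = c3 x / (c3 x - c3 z) := by rw [hs3, if_pos h]
        rw [hs']
        exact coord_lt_one h hx3 rfl)
  have hzero : c1 y = 0 ∨ c2 y = 0 ∨ c3 y = 0 := by
    have hmin : tt = s1 ∨ tt = s2 ∨ tt = s3 := by
      rcases min_choice s1 (min s2 s3) with h | h
      · exact Or.inl (by rw [htt, h])
      · rcases min_choice s2 s3 with h' | h'
        · exact Or.inr (Or.inl (by rw [htt, h, h']))
        · exact Or.inr (Or.inr (by rw [htt, h, h']))
    rcases hmin with h | h | h
    · left
      have hneg : c1 z < 0 := by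
        by_contra hpos
        rw [hs1, if_neg hpos] at h
        rw [h] at httlt
        exact lt_irrefl 1 httlt
      have hs' : s1 = c1 x / (c1 x - c1 z) := by rw [hs1, if_pos hneg]
      rw [hval1, h, hs']
      exact coord_zero hneg hx1 rfl
    · right; left
      have hneg : c2 z < 0 := by
        by_contra hpos
        rw [hs2, if_neg hpos] at h
        rw [h] at httlt
        exact lt_irrefl 1 httlt
      have hs' : s2 = c2 x / (c2 x - c2 z) := by rw [hs2, if_pos hneg]
      rw [hval2, h, hs']
      exact coord_zero hneg hx2 rfl
    · right; right
      have hneg : c3 z < 0 := by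
        by_contra hpos
        rw [hs3, if_neg hpos] at h
        rw [h] at httlt
        exact lt_irrefl 1 httlt
      have hs' : s3 = c3 x / (c3 x - c3 z) := by rw [hs3, if_pos hneg]
      rw [hval3, h, hs']
      exact coord_zero hneg hx3 rfl
  refine ⟨y, hyseg, ?_⟩
  have hysum3 := hsum y
  have hidy := hID y
  rcases hzero with h0 | h0 | h0
  · left
    refine ⟨c2 y, c3 y, hy2, hy3, by linarith, ?_⟩
    rw [h0, zero_smul, zero_add] at hidy
    exact hidy
  · right; left
    refine ⟨c1 y, c3 y, hy1, hy3, by linarith, ?_⟩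
    rw [h0, zero_smul, add_zero] at hidy
    exact hidy
  · right; right
    refine ⟨c1 y, c2 y, hy1, hy2, by linarith, ?_⟩
    rw [h0, zero_smul, add_zero] at hidy
    exact hidy


open Fin.NatCast in
lemma segment_avoid {n : ℕ} [NeZero n] (C : Fin n → E2) (P Q : E2)
    (hP : P ∉ convexHull ℝ (Set.range C)) (hQ : Q ∉ convexHull ℝ (Set.range C))
    (hd : ∀ b, segment ℝ (C b) (C (b + 1)) ∩ segment ℝ P Q = ∅) :
    convexHull ℝ (Set.range C) ∩ segment ℝ P Q = ∅ := by
  by_contra hne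
  obtain ⟨w, hwM, hwS⟩ : ∃ w, w ∈ convexHull ℝ (Set.range C) ∧ w ∈ segment ℝ P Q := by
    rcases Set.eq_empty_or_nonempty (convexHull ℝ (Set.range C) ∩ segment ℝ P Q) with h | ⟨w, hw⟩
    · exact absurd h hne
    · exact ⟨w, hw.1, hw.2⟩
  clear hne
  rcases eq_or_ne P Q with rfl | hPQ
  · rw [segment_same] at hwS
    rw [Set.mem_singleton_iff] at hwS
    exact hP (hwS ▸ hwM)
  set u := Q - P with hu
  have hu0 : u ≠ 0 := sub_ne_zero.mpr (Ne.symm hPQ)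
  set g : E2 → ℝ := fun x => det2 u (x - P) with hg
  have gaff : ∀ a b : ℝ, ∀ y z : E2, a + b = 1 → g (a • y + b • z) = a * g y + b * g z := by
    intro a b y z hab
    have hb : b = 1 - a := by linarith
    subst hb
    simp only [hg, hu, det2, PiLp.smul_apply, PiLp.add_apply, PiLp.sub_apply, smul_eq_mul]
    ring
  have gseg : ∀ z ∈ segment ℝ P Q, g z = 0 := by
    intro z hz
    obtain ⟨a, b, ha, hb, hab, rfl⟩ := hz
    rw [gaff a b P Q hab]
    simp only [hg, hu, det2, PiLp.sub_apply]
    ring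
  have hline : ∀ x, x ∈ convexHull ℝ (Set.range C) → g x = 0 → x ∈ segment ℝ P Q := by
    intro x hxM hgx
    obtain ⟨t, ht⟩ := det2_parallel hgx hu0
    have hx : x = P + t • u := by
      have : x - P = t • u := ht
      rw [← this]; abel
    obtain ⟨s, hs01, hws⟩ : ∃ s, s ∈ Set.Icc (0:ℝ) 1 ∧ w = P + s • u := by
      rw [segment_eq_image'] at hwS
      obtain ⟨s, hs, h⟩ := hwS
      exact ⟨s, hs, h.symm⟩
    rcases lt_or_ge t 0 with htneg | ht0
    · exfalso; apply hP
      have hst : 0 < s - t := by linarith [hs01.1]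
      have hPcombo : P = (s / (s - t)) • x + (-t / (s - t)) • w := by
        rw [hx, hws]
        apply ext2 <;>
          simp only [PiLp.smul_apply, PiLp.add_apply, PiLp.sub_apply, smul_eq_mul, hu] <;>
          field_simp <;> ring
      rw [hPcombo]
      exact convex_convexHull ℝ (Set.range C) hxM hwM
        (div_nonneg hs01.1 hst.le)
        (div_nonneg (by linarith) hst.le)
        (by field_simp; ring)
    rcases le_or_gt t 1 with ht1 | ht1
    · rw [segment_eq_image']
      exact ⟨t, ⟨ht0, ht1⟩, hx.symm⟩
    · exfalso; apply hQ
      have hst : 0 < t - s := by linarith [hs01.2]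
      have hQcombo : Q = ((t - 1) / (t - s)) • w + ((1 - s) / (t - s)) • x := by
        rw [hx, hws]
        apply ext2 <;>
          simp only [PiLp.smul_apply, PiLp.add_apply, PiLp.sub_apply, smul_eq_mul, hu] <;>
          field_simp <;> ring
      rw [hQcombo]
      exact convex_convexHull ℝ (Set.range C) hwM hxM
        (div_nonneg (by linarith) hst.le)
        (div_nonneg (by linarith [hs01.2]) hst.le)
        (by field_simp; ring)
  -- no vertex is on the line
  have hCne : ∀ b, g (C b) ≠ 0 := by
    intro b h0
    have hmem : C b ∈ segment ℝ P Q := hline _ (subset_convexHull ℝ _ ⟨b, rfl⟩) h0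
    have : C b ∈ segment ℝ (C b) (C (b + 1)) ∩ segment ℝ P Q :=
      ⟨left_mem_segment ℝ _ _, hmem⟩
    rw [hd b] at this; exact this
  -- not all vertices on one strict side
  have hgw : g w = 0 := gseg w hwS
  have hnotneg : ¬ (∀ b, g (C b) < 0) := by
    intro hall
    have hconv : Convex ℝ {x : E2 | g x < 0} := by
      intro x hx y hy a b ha hb hab
      simp only [Set.mem_setOf_eq] at *
      rw [gaff a b x y hab]
      rcases eq_or_lt_of_le ha with rfl | ha'
      · have hb1 : b = 1 := by linarith
        rw [hb1]; simpa using hy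
      · nlinarith
    have hsub : convexHull ℝ (Set.range C) ⊆ {x : E2 | g x < 0} := by
      apply convexHull_min _ hconv
      rintro v ⟨b, rfl⟩
      exact hall b
    have := hsub hwM
    rw [Set.mem_setOf_eq, hgw] at this
    exact lt_irrefl 0 this
  have hnotpos : ¬ (∀ b, 0 < g (C b)) := by
    intro hall
    have hconv : Convex ℝ {x : E2 | 0 < g x} := by
      intro x hx y hy a b ha hb hab
      simp only [Set.mem_setOf_eq] at *
      rw [gaff a b x y hab]
      rcases eq_or_lt_of_le ha with rfl | ha'
      · have hb1 : b = 1 := by linarith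
        rw [hb1]; simpa using hy
      · nlinarith
    have hsub : convexHull ℝ (Set.range C) ⊆ {x : E2 | 0 < g x} := by
      apply convexHull_min _ hconv
      rintro v ⟨b, rfl⟩
      exact hall b
    have := hsub hwM
    rw [Set.mem_setOf_eq, hgw] at this
    exact lt_irrefl 0 this
  push_neg at hnotneg hnotpos
  obtain ⟨p, hp⟩ := hnotneg
  obtain ⟨q, hq⟩ := hnotpos
  have hp' : 0 < g (C p) := lt_of_le_of_ne hp (Ne.symm (hCne p))
  have hq' : g (C q) < 0 := lt_of_le_of_ne hq (hCne q)
  -- a sign change along consecutive vertices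
  have step : ∃ b : Fin n, (g (C b) < 0 ∧ 0 < g (C (b + 1))) ∨ (g (C (b + 1)) < 0 ∧ 0 < g (C b)) := by
    by_contra hstep
    push_neg at hstep
    have mono : ∀ b : Fin n, g (C b) < 0 → g (C (b + 1)) < 0 := by
      intro b hb
      rcases lt_trichotomy (g (C (b + 1))) 0 with h | h | h
      · exact h
      · exact absurd h (hCne _)
      · linarith [(hstep b).1 hb]
    have iter : ∀ k : ℕ, g (C (q + (k : Fin n))) < 0 := by
      intro k
      induction k with
      | zero => simpa using hq'
      | succ k ih =>
          have hcast : ((k + 1 : ℕ) : Fin n) = (k : Fin n) + 1 := by push_cast; ring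
          rw [hcast, ← add_assoc]
          exact mono _ ih
    have := iter ((p - q).val)
    rw [Fin.cast_val_eq_self] at this
    have hqp : q + (p - q) = p := by abel
    rw [hqp] at this
    linarith
  -- intermediate value on the sign-changing edge
  have ivt : ∀ y z : E2, g y < 0 → 0 < g z → ∃ r ∈ segment ℝ y z, g r = 0 := by
    intro y z hy hz
    set t := g y / (g y - g z) with htdef
    have hden : g y - g z < 0 := by linarith
    have ht0 : 0 ≤ t := le_of_lt (div_pos_of_neg_of_neg hy hden)
    have hkey : t * (g y - g z) = g y := by
      rw [htdef, div_mul_cancel₀ _ hden.ne]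
    have ht1 : t ≤ 1 := by nlinarith
    refine ⟨(1 - t) • y + t • z, ⟨1 - t, t, by linarith, ht0, by ring, rfl⟩, ?_⟩
    rw [gaff (1 - t) t y z (by ring)]
    nlinarith [hkey]
  obtain ⟨b, hcase⟩ := step
  rcases hcase with ⟨hb1, hb2⟩ | ⟨hb1, hb2⟩
  · obtain ⟨r, hr, hgr⟩ := ivt (C b) (C (b + 1)) hb1 hb2
    have hrM : r ∈ convexHull ℝ (Set.range C) :=
      (convex_convexHull ℝ (Set.range C)).segment_subset
        (subset_convexHull ℝ _ ⟨b, rfl⟩) (subset_convexHull ℝ _ ⟨b + 1, rfl⟩) hr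
    have : r ∈ segment ℝ (C b) (C (b + 1)) ∩ segment ℝ P Q := ⟨hr, hline r hrM hgr⟩
    rw [hd b] at this; exact this
  · obtain ⟨r, hr, hgr⟩ := ivt (C (b + 1)) (C b) hb1 hb2
    rw [segment_symm] at hr
    have hrM : r ∈ convexHull ℝ (Set.range C) :=
      (convex_convexHull ℝ (Set.range C)).segment_subset
        (subset_convexHull ℝ _ ⟨b, rfl⟩) (subset_convexHull ℝ _ ⟨b + 1, rfl⟩) hr
    have : r ∈ segment ℝ (C b) (C (b + 1)) ∩ segment ℝ P Q := ⟨hr, hline r hrM hgr⟩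
    rw [hd b] at this; exact this


end PolyAux
end

theorem polygons_disjoint_of_vertices_edges {α β : ℕ} [NeZero α] [NeZero β]
    (A : Fin α → EuclideanSpace ℝ (Fin 2)) (B : Fin β → EuclideanSpace ℝ (Fin 2))
    (hvA : ∀ a, A a ∉ convexHull ℝ (Set.range B))
    (hvB : ∀ b, B b ∉ convexHull ℝ (Set.range A))
    (hedges : ∀ a b, segment ℝ (A a) (A (a + 1)) ∩ segment ℝ (B b) (B (b + 1)) = ∅) :
    convexHull ℝ (Set.range A) ∩ convexHull ℝ (Set.range B) = ∅ := by
  classical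
  rw [Set.eq_empty_iff_forall_notMem]
  rintro x ⟨hxA, hxB⟩
  -- Step A: edges of `A` avoid the hull of `B`
  have stepA : ∀ a, segment ℝ (A a) (A (a + 1)) ∩ convexHull ℝ (Set.range B) = ∅ := by
    intro a
    rw [Set.inter_comm]
    exact PolyAux.segment_avoid B (A a) (A (a + 1)) (hvA a) (hvA (a + 1))
      (fun b => by rw [Set.inter_comm]; exact hedges a b)
  -- hence the hull of `A` avoids every chord of `B`
  have chordA : ∀ p q : EuclideanSpace ℝ (Fin 2), p ∈ Set.range B → q ∈ Set.range B →
      convexHull ℝ (Set.range A) ∩ segment ℝ p q = ∅ := by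
    intro p q hp hq
    apply PolyAux.segment_avoid A p q
    · obtain ⟨i, rfl⟩ := hp; exact hvB i
    · obtain ⟨i, rfl⟩ := hq; exact hvB i
    · intro a
      rw [Set.eq_empty_iff_forall_notMem]
      rintro r ⟨hr1, hr2⟩
      have hrB : r ∈ convexHull ℝ (Set.range B) :=
        (convex_convexHull ℝ _).segment_subset (subset_convexHull ℝ _ hp)
          (subset_convexHull ℝ _ hq) hr2
      have hmem : r ∈ segment ℝ (A a) (A (a + 1)) ∩ convexHull ℝ (Set.range B) := ⟨hr1, hrB⟩
      rw [stepA a] at hmem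
      exact hmem
  -- Caratheodory
  rw [convexHull_eq_union] at hxB
  simp only [Set.mem_iUnion] at hxB
  obtain ⟨t, hts, hai, hxt⟩ := hxB
  have hcard : t.card ≤ 3 := by
    have h1 := hai.card_le_finrank_succ
    have h2 : Module.finrank ℝ ↥(vectorSpan ℝ (Set.range ((↑) : t → EuclideanSpace ℝ (Fin 2)))) ≤
        Module.finrank ℝ (EuclideanSpace ℝ (Fin 2)) := Submodule.finrank_le _
    rw [finrank_euclideanSpace_fin] at h2
    rw [Fintype.card_coe] at h1
    omega
  have hc03 : t.card = 0 ∨ t.card = 1 ∨ t.card = 2 ∨ t.card = 3 := by omega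
  rcases hc03 with hc | hc | hc | hc
  · rw [Finset.card_eq_zero] at hc
    subst hc
    simp only [Finset.coe_empty, convexHull_empty] at hxt
    exact hxt
  · obtain ⟨a, rfl⟩ := Finset.card_eq_one.mp hc
    rw [Finset.coe_singleton, convexHull_singleton, Set.mem_singleton_iff] at hxt
    have ha : a ∈ Set.range B := hts (by simp)
    obtain ⟨i, hi⟩ := ha
    rw [hxt, ← hi] at hxA
    exact hvB i hxA
  · obtain ⟨a, b, hab, rfl⟩ := Finset.card_eq_two.mp hc
    have hsub : (↑({a, b} : Finset (EuclideanSpace ℝ (Fin 2))) : Set (EuclideanSpace ℝ (Fin 2)))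
        = {a, b} := by simp
    rw [hsub, convexHull_pair] at hxt
    have ha : a ∈ Set.range B := hts (by simp)
    have hb : b ∈ Set.range B := hts (by simp)
    exact (Set.eq_empty_iff_forall_notMem.mp (chordA a b ha hb)) x ⟨hxA, hxt⟩
  · obtain ⟨a, b, c, hab, hac, hbc, rfl⟩ := Finset.card_eq_three.mp hc
    have hsub : (↑({a, b, c} : Finset (EuclideanSpace ℝ (Fin 2))) :
        Set (EuclideanSpace ℝ (Fin 2))) = {a, b, c} := by simp
    rw [hsub] at hxt
    have ha : a ∈ Set.range B := hts (by simp)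
    have hb : b ∈ Set.range B := hts (by simp)
    have hcr : c ∈ Set.range B := hts (by simp)
    have htriB : convexHull ℝ ({a, b, c} : Set (EuclideanSpace ℝ (Fin 2))) ⊆
        convexHull ℝ (Set.range B) :=
      convexHull_mono (by simp [Set.insert_subset_iff, ha, hb, hcr])
    rcases eq_or_ne (PolyAux.det2 (b - a) (c - a)) 0 with hdet | hdet
    · rcases PolyAux.tri_cover hdet with hcov | hcov | hcov
      · exact (Set.eq_empty_iff_forall_notMem.mp (chordA a b ha hb)) x ⟨hxA, hcov hxt⟩
      · exact (Set.eq_empty_iff_forall_notMem.mp (chordA b c hb hcr)) x ⟨hxA, hcov hxt⟩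
      · exact (Set.eq_empty_iff_forall_notMem.mp (chordA a c ha hcr)) x ⟨hxA, hcov hxt⟩
    · have hz : A 0 ∉ convexHull ℝ ({a, b, c} : Set (EuclideanSpace ℝ (Fin 2))) :=
        fun hmem => hvA 0 (htriB hmem)
      obtain ⟨y, hyseg, hycase⟩ := PolyAux.tri_exit hdet hxt hz
      have hyA : y ∈ convexHull ℝ (Set.range A) :=
        (convex_convexHull ℝ _).segment_subset hxA (subset_convexHull ℝ _ ⟨0, rfl⟩) hyseg
      rcases hycase with hy | hy | hy
      · exact (Set.eq_empty_iff_forall_notMem.mp (chordA b c hb hcr)) y ⟨hyA, hy⟩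
      · exact (Set.eq_empty_iff_forall_notMem.mp (chordA a c ha hcr)) y ⟨hyA, hy⟩
      · exact (Set.eq_empty_iff_forall_notMem.mp (chordA a b ha hb)) y ⟨hyA, hy⟩
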